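/- Let w be a weight function on V and take w̃ = w. Then for every α ≥ 0 and every integer i, the homology H_i(R_α(Ĝ^{w,w})) of the augmented ℤ/2 chain complex of the Vietoris–Rips complex of Ĝ^{w,w} vanishes. -/

import Mathlib

open scoped ENNReal
noncomputable section
attribute [local instance] Classical.propDecidable

namespace RTD

/-- The linear map between ℤ/2-spaces of chains given by an explicit coefficient matrix. -/
def lmap {ι κ : Type*} [Fintype ι] (M : ι → κ → ZMod 2) :
    (ι → ZMod 2) →ₗ[ZMod 2] (κ → ZMod 2) where
  toFun f k := ∑ i, M i k * f i
  map_add' f g := by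
    funext k
    simp [mul_add, Finset.sum_add_distrib]
  map_smul' c f := by
    funext k
    simp only [Pi.smul_apply, smul_eq_mul, RingHom.id_apply, Finset.mul_sum]
    exact Finset.sum_congr rfl fun i _ => by ring

variable {U : Type*}

/-- Simplexes of the Vietoris–Rips complex at threshold `α` having `n` vertices.
For `n = 0` this is the empty set, serving as the augmentation generator, so that
position `n` of the augmented chain complex corresponds to homological degree `n - 1`. -/
abbrev Simp [Fintype U] (d : U → U → ℝ≥0∞) (α : ℝ) (n : ℕ) :=
  {σ : Finset U // σ.card = n ∧ ∀ x ∈ σ, ∀ y ∈ σ, x ≠ y → d x y ≤ ENNReal.ofReal α}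

/-- Position-`n` chains (over ℤ/2) of the augmented chain complex of the Vietoris–Rips complex. -/
abbrev Ch [Fintype U] (d : U → U → ℝ≥0∞) (α : ℝ) (n : ℕ) := Simp d α n → ZMod 2

/-- The boundary operator of the augmented chain complex (over ℤ/2 all signs are 1);
the coefficient of `τ` in `∂ σ` is 1 exactly when `τ ⊂ σ`. -/
def bdry [Fintype U] (d : U → U → ℝ≥0∞) (α : ℝ) (n : ℕ) :
    Ch d α (n + 1) →ₗ[ZMod 2] Ch d α n :=
  lmap fun σ τ => if τ.1 ⊆ σ.1 then 1 else 0

def cycles [Fintype U] (d : U → U → ℝ≥0∞) (α : ℝ) :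
    (n : ℕ) → Submodule (ZMod 2) (Ch d α n)
  | 0 => ⊤
  | n + 1 => LinearMap.ker (bdry d α n)

/-- Homology of the augmented chain complex at position `n`
(i.e. reduced homology in degree `n - 1`). -/
abbrev homologyAt [Fintype U] (d : U → U → ℝ≥0∞) (α : ℝ) (n : ℕ) :=
  cycles d α n ⧸ Submodule.comap (cycles d α n).subtype (LinearMap.range (bdry d α n))

/-- Reduced simplicial ℤ/2 homology `H_i`, `i ≥ 0`, of the Vietoris–Rips complex. -/
abbrev Hred [Fintype U] (d : U → U → ℝ≥0∞) (α : ℝ) (i : ℕ) := homologyAt d α (i + 1)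

/-- `σ` is a simplex of the Vietoris–Rips complex at threshold `α`. -/
def IsVR [Fintype U] (d : U → U → ℝ≥0∞) (α : ℝ) (σ : Finset U) : Prop :=
  σ.Nonempty ∧ ∀ x ∈ σ, ∀ y ∈ σ, x ≠ y → d x y ≤ ENNReal.ofReal α

end RTD
namespace RTD

/-- Weight functions take extended nonnegative real values; `wmin` is the pointwise minimum. -/
def wmin {N : ℕ} (w wt : Fin N → Fin N → ℝ≥0∞) : Fin N → Fin N → ℝ≥0∞ :=
  fun i j => min (w i j) (wt i j)

/-- Vertices of the graph Ĝ^{w,w̃}: the vertices `A_i` (`.inl (.inl i)`),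
their copies `A'_i` (`.inl (.inr i)`), and the extra vertex `O` (`.inr ()`). -/
abbrev VH (N : ℕ) := (Fin N ⊕ Fin N) ⊕ Unit

/-- The edge weights of the weighted graph Ĝ^{w,w̃} (values on the diagonal are irrelevant). -/
def dhat {N : ℕ} (w wt : Fin N → Fin N → ℝ≥0∞) : VH N → VH N → ℝ≥0∞
  | Sum.inl (Sum.inl i), Sum.inl (Sum.inl j) => w i j
  | Sum.inl (Sum.inl i), Sum.inl (Sum.inr j) =>
      if i < j then w i j else if i = j then 0 else ⊤
  | Sum.inl (Sum.inr i), Sum.inl (Sum.inl j) =>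
      if j < i then w j i else if j = i then 0 else ⊤
  | Sum.inl (Sum.inr i), Sum.inl (Sum.inr j) => if i = j then 0 else min (w i j) (wt i j)
  | Sum.inl (Sum.inl _), Sum.inr _ => 0
  | Sum.inr _, Sum.inl (Sum.inl _) => 0
  | Sum.inl (Sum.inr _), Sum.inr _ => ⊤
  | Sum.inr _, Sum.inl (Sum.inr _) => ⊤
  | Sum.inr _, Sum.inr _ => 0

/-- The set of unprimed vertices `A_i`, `i ∈ s`, of Ĝ^{w,w̃}. -/
def unp {N : ℕ} (s : Finset (Fin N)) : Finset (VH N) :=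
  s.image fun i => Sum.inl (Sum.inl i)

/-- The set of primed vertices `A'_i`, `i ∈ s`, of Ĝ^{w,w̃}. -/
def prm {N : ℕ} (s : Finset (Fin N)) : Finset (VH N) :=
  s.image fun i => Sum.inl (Sum.inr i)

/-- The extra vertex `O` of Ĝ^{w,w̃}. -/
def vO {N : ℕ} : VH N := Sum.inr ()

/-- The indices `i` with `A_i ∈ τ`. -/
def uIdx {N : ℕ} (τ : Finset (VH N)) : Finset (Fin N) :=
  Finset.univ.filter fun i => Sum.inl (Sum.inl i) ∈ τ

/-- The indices `i` with `A'_i ∈ τ`. -/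
def pIdx {N : ℕ} (τ : Finset (VH N)) : Finset (Fin N) :=
  Finset.univ.filter fun i => Sum.inl (Sum.inr i) ∈ τ


section Aux

variable {N : ℕ}

lemma mem_pIdx {σ : Finset (VH N)} {i : Fin N} :
    i ∈ pIdx σ ↔ Sum.inl (Sum.inr i) ∈ σ := by simp [pIdx]

/-- The minimal primed index of a simplex (given as `p = pIdx σ`), or `N` if none. -/
def muOf (N : ℕ) (p : Finset (Fin N)) : ℕ :=
  if h : p.Nonempty then ((p.min' h : Fin N) : ℕ) else N

/-- The matched vertex: `A_m` for `m` the minimal primed index, or `O` if none. -/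
def vtxOf (N : ℕ) (p : Finset (Fin N)) : VH N :=
  if h : p.Nonempty then Sum.inl (Sum.inl (p.min' h)) else vO

lemma vtxOf_ne_primed (p : Finset (Fin N)) (j : Fin N) :
    vtxOf N p ≠ Sum.inl (Sum.inr j) := by
  unfold vtxOf; split <;> simp [vO]

lemma muOf_le (p : Finset (Fin N)) : muOf N p ≤ N := by
  unfold muOf; split
  · exact le_of_lt (Fin.isLt _)
  · exact le_rfl

lemma pIdx_insert_unprimed {σ : Finset (VH N)} {x : VH N}
    (hx : ∀ j : Fin N, x ≠ Sum.inl (Sum.inr j)) : pIdx (insert x σ) = pIdx σ := by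
  ext i
  simp only [mem_pIdx, Finset.mem_insert]
  constructor
  · rintro (h | h)
    · exact absurd h.symm (hx i)
    · exact h
  · exact Or.inr

lemma pIdx_erase_unprimed {σ : Finset (VH N)} {x : VH N}
    (hx : ∀ j : Fin N, x ≠ Sum.inl (Sum.inr j)) : pIdx (σ.erase x) = pIdx σ := by
  ext i
  simp only [mem_pIdx, Finset.mem_erase]
  constructor
  · exact fun h => h.2
  · exact fun h => ⟨fun he => hx i he.symm, h⟩

lemma pIdx_insert_primed {σ : Finset (VH N)} {j : Fin N} :
    pIdx (insert (Sum.inl (Sum.inr j)) σ) = insert j (pIdx σ) := by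
  ext i
  simp [mem_pIdx, Finset.mem_insert]

lemma pIdx_erase_primed {σ : Finset (VH N)} {j : Fin N} :
    pIdx (σ.erase (Sum.inl (Sum.inr j))) = (pIdx σ).erase j := by
  ext i
  simp [mem_pIdx, Finset.mem_erase]

lemma dhat_symm {w : Fin N → Fin N → ℝ≥0∞} (hw : ∀ i j, w i j = w j i) (a b : VH N) :
    dhat w w a b = dhat w w b a := by
  rcases a with (i | i) | u <;> rcases b with (j | j) | v
  · exact hw i j
  · rfl
  · rfl
  · rfl
  · by_cases h : i = j
    · subst h; rfl
    · show (if i = j then 0 else min (w i j) (w i j)) =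
        (if j = i then 0 else min (w j i) (w j i))
      rw [if_neg h, if_neg (Ne.symm h), hw i j]
  · rfl
  · rfl
  · rfl
  · rfl

lemma exists_insert_of_card {γ : Type*} [DecidableEq γ] {s t : Finset γ} (hst : s ⊆ t)
    (h : t.card = s.card + 1) : ∃ y, y ∉ s ∧ t = insert y s := by
  have hcd : (t \ s).card = 1 := by rw [Finset.card_sdiff_of_subset hst, h]; omega
  obtain ⟨y, hy⟩ := Finset.card_eq_one.mp hcd
  have hys : y ∈ t \ s := by rw [hy]; exact Finset.mem_singleton_self y
  refine ⟨y, (Finset.mem_sdiff.mp hys).2, ?_⟩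
  ext a
  simp only [Finset.mem_insert]
  constructor
  · intro ha
    by_cases has : a ∈ s
    · exact Or.inr has
    · left
      have : a ∈ t \ s := Finset.mem_sdiff.mpr ⟨ha, has⟩
      rw [hy] at this; exact Finset.mem_singleton.mp this
  · rintro (rfl | ha)
    · exact (Finset.mem_sdiff.mp hys).1
    · exact hst ha

end Aux

section Vtx

variable {N : ℕ} {w : Fin N → Fin N → ℝ≥0∞} {α : ℝ}

/-- Key extension lemma: adding the matched vertex preserves the Vietoris–Rips condition. -/
lemma insert_vtx_vr (hw : ∀ i j, w i j = w j i) {σ : Finset (VH N)}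
    (hσ : ∀ x ∈ σ, ∀ y ∈ σ, x ≠ y → dhat w w x y ≤ ENNReal.ofReal α) :
    ∀ x ∈ insert (vtxOf N (pIdx σ)) σ, ∀ y ∈ insert (vtxOf N (pIdx σ)) σ,
      x ≠ y → dhat w w x y ≤ ENNReal.ofReal α := by
  set v := vtxOf N (pIdx σ) with hv
  have key : ∀ x ∈ σ, x ≠ v → dhat w w v x ≤ ENNReal.ofReal α := by
    intro x hx hxv
    by_cases h : (pIdx σ).Nonempty
    · set m := (pIdx σ).min' h with hm
      have hvm : v = Sum.inl (Sum.inl m) := by rw [hv, vtxOf, dif_pos h]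
      have hmem : Sum.inl (Sum.inr m) ∈ σ := mem_pIdx.mp ((pIdx σ).min'_mem h)
      rcases x with (j | j) | u
      · -- x = A_j
        have hjm : j ≠ m := by
          intro hjme; apply hxv; rw [hvm, hjme]
        have hd : dhat w w (Sum.inl (Sum.inl j)) (Sum.inl (Sum.inr m)) ≤ ENNReal.ofReal α :=
          hσ _ hx _ hmem (by simp)
        rw [hvm]
        show (w m j) ≤ _
        rcases lt_or_gt_of_ne hjm with hlt | hgt
        · have : dhat w w (Sum.inl (Sum.inl j)) (Sum.inl (Sum.inr m)) = w j m := by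
            show (if j < m then w j m else if j = m then 0 else ⊤) = w j m
            rw [if_pos hlt]
          rw [this] at hd; rw [hw m j]; exact hd
        · exfalso
          have : dhat w w (Sum.inl (Sum.inl j)) (Sum.inl (Sum.inr m)) = ⊤ := by
            show (if j < m then w j m else if j = m then 0 else ⊤) = ⊤
            rw [if_neg (not_lt_of_gt hgt), if_neg hjm]
          rw [this, top_le_iff] at hd
          exact ENNReal.ofReal_ne_top hd
      · -- x = A'_j
        have hjp : j ∈ pIdx σ := mem_pIdx.mpr hx
        have hmj : m ≤ j := (pIdx σ).min'_le j hjp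
        rw [hvm]
        show (if m < j then w m j else if m = j then 0 else ⊤) ≤ _
        rcases eq_or_lt_of_le hmj with heq | hlt
        · rw [if_neg (by rw [heq]; exact lt_irrefl j), if_pos heq]
          exact zero_le
        · rw [if_pos hlt]
          have hd : dhat w w (Sum.inl (Sum.inr m)) (Sum.inl (Sum.inr j)) ≤ ENNReal.ofReal α :=
            hσ _ hmem _ hx (by simp [Fin.ne_of_lt hlt])
          have : dhat w w (Sum.inl (Sum.inr m)) (Sum.inl (Sum.inr j)) = w m j := by
            show (if m = j then 0 else min (w m j) (w m j)) = w m j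
            rw [if_neg (Fin.ne_of_lt hlt), min_self]
          rwa [this] at hd
      · -- x = O
        rw [hvm]
        show (0 : ℝ≥0∞) ≤ _
        exact zero_le
    · have hvO : v = vO := by rw [hv, vtxOf, dif_neg h]
      rcases x with (j | j) | u
      · rw [hvO]; exact zero_le
      · exact absurd (Finset.nonempty_of_ne_empty (Finset.ne_empty_of_mem (mem_pIdx.mpr hx))) h
      · exact absurd (by rw [hvO]; rfl) hxv
  intro x hx y hy hxy
  rcases Finset.mem_insert.mp hx with rfl | hx'
  · rcases Finset.mem_insert.mp hy with rfl | hy'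
    · exact absurd rfl hxy
    · exact key y hy' (Ne.symm hxy)
  · rcases Finset.mem_insert.mp hy with rfl | hy'
    · rw [dhat_symm hw]; exact key x hx' hxy
    · exact hσ x hx' y hy' hxy

/-- Erasing an unprimed vertex `x ≠ v` from `insert v σ` gives a "down" face. -/
lemma face_down_unprimed {σ : Finset (VH N)} (hv : vtxOf N (pIdx σ) ∉ σ)
    {x : VH N} (hx : x ∈ σ) (hxu : ∀ j : Fin N, x ≠ Sum.inl (Sum.inr j)) :
    vtxOf N (pIdx ((insert (vtxOf N (pIdx σ)) σ).erase x)) ∈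
      (insert (vtxOf N (pIdx σ)) σ).erase x := by
  set v := vtxOf N (pIdx σ) with hvdef
  have hp : pIdx ((insert v σ).erase x) = pIdx σ := by
    rw [pIdx_erase_unprimed hxu, pIdx_insert_unprimed (vtxOf_ne_primed _)]
  rw [hp]
  exact Finset.mem_erase.mpr ⟨fun h => hv (by rw [hvdef, h]; exact hx), Finset.mem_insert_self v σ⟩

/-- Erasing a primed vertex `A'_j` with `j` not minimal gives a "down" face. -/
lemma face_down_primed {σ : Finset (VH N)} (hv : vtxOf N (pIdx σ) ∉ σ)
    (h : (pIdx σ).Nonempty) {j : Fin N} (hj : j ∈ pIdx σ) (hjm : j ≠ (pIdx σ).min' h) :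
    vtxOf N (pIdx ((insert (vtxOf N (pIdx σ)) σ).erase (Sum.inl (Sum.inr j)))) ∈
      (insert (vtxOf N (pIdx σ)) σ).erase (Sum.inl (Sum.inr j)) := by
  set v := vtxOf N (pIdx σ) with hvdef
  set m := (pIdx σ).min' h with hmdef
  have hvm : v = Sum.inl (Sum.inl m) := by rw [hvdef, vtxOf, dif_pos h]
  have hp : pIdx ((insert v σ).erase (Sum.inl (Sum.inr j))) = (pIdx σ).erase j := by
    rw [pIdx_erase_primed, pIdx_insert_unprimed (vtxOf_ne_primed _)]
  have hme : m ∈ (pIdx σ).erase j :=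
    Finset.mem_erase.mpr ⟨Ne.symm hjm, (pIdx σ).min'_mem h⟩
  have hne : ((pIdx σ).erase j).Nonempty := ⟨m, hme⟩
  have hmin : ((pIdx σ).erase j).min' hne = m := by
    apply le_antisymm (Finset.min'_le _ m hme)
    exact Finset.le_min' _ _ _ fun b hb => (pIdx σ).min'_le b (Finset.mem_of_mem_erase hb)
  have : vtxOf N (pIdx ((insert v σ).erase (Sum.inl (Sum.inr j)))) = v := by
    rw [hp, vtxOf, dif_pos hne, hmin, hvm]
  rw [this]
  refine Finset.mem_erase.mpr ⟨?_, Finset.mem_insert_self v σ⟩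
  rw [hvm]; simp
/-- Erasing the primed vertex with minimal index strictly increases `muOf`. -/
lemma mu_face_gt {σ : Finset (VH N)} (h : (pIdx σ).Nonempty) :
    muOf N (pIdx σ) <
      muOf N (pIdx ((insert (vtxOf N (pIdx σ)) σ).erase (Sum.inl (Sum.inr ((pIdx σ).min' h))))) := by
  set v := vtxOf N (pIdx σ)
  set m := (pIdx σ).min' h with hmdef
  have hp : pIdx ((insert v σ).erase (Sum.inl (Sum.inr m))) = (pIdx σ).erase m := by
    rw [pIdx_erase_primed, pIdx_insert_unprimed (vtxOf_ne_primed _)]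
  have hmu : muOf N (pIdx σ) = (m : ℕ) := by rw [muOf, dif_pos h]
  rw [hp, hmu]
  by_cases hne : ((pIdx σ).erase m).Nonempty
  · rw [muOf, dif_pos hne]
    have hmem := ((pIdx σ).erase m).min'_mem hne
    have h1 : m ≤ ((pIdx σ).erase m).min' hne :=
      (pIdx σ).min'_le _ (Finset.mem_of_mem_erase hmem)
    have h2 : ((pIdx σ).erase m).min' hne ≠ m := (Finset.mem_erase.mp hmem).1
    have : m < ((pIdx σ).erase m).min' hne := lt_of_le_of_ne h1 (Ne.symm h2)
    exact this
  · rw [muOf, dif_neg hne]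
    exact m.isLt

end Vtx

section Bdry

variable {U : Type*} [Fintype U] (d : U → U → ℝ≥0∞) (α : ℝ)

lemma bdry_apply (n : ℕ) (z : Ch d α (n+1)) (τ : Simp d α n) :
    bdry d α n z τ = ∑ σ : Simp d α (n+1), (if τ.1 ⊆ σ.1 then 1 else 0) * z σ := rfl

lemma between_card (n : ℕ) (ρ : Simp d α n) (τ : Simp d α (n+2)) (hρτ : ρ.1 ⊆ τ.1) :
    (Finset.univ.filter fun σ : Simp d α (n+1) => ρ.1 ⊆ σ.1 ∧ σ.1 ⊆ τ.1).card = 2 := by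
  have hcard : (τ.1 \ ρ.1).card = 2 := by
    rw [Finset.card_sdiff_of_subset hρτ, ρ.2.1, τ.2.1]; omega
  have hbij : (τ.1 \ ρ.1).card
      = (Finset.univ.filter fun σ : Simp d α (n+1) => ρ.1 ⊆ σ.1 ∧ σ.1 ⊆ τ.1).card := by
    refine Finset.card_bij (fun u hu => (⟨insert u ρ.1, ?_, ?_⟩ : Simp d α (n+1))) ?_ ?_ ?_
    · rw [Finset.card_insert_of_notMem (Finset.mem_sdiff.mp hu).2, ρ.2.1]
    · intro x hx y hy hxy
      have hsub : insert u ρ.1 ⊆ τ.1 := by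
        intro a ha
        rcases Finset.mem_insert.mp ha with rfl | ha'
        · exact (Finset.mem_sdiff.mp hu).1
        · exact hρτ ha'
      exact τ.2.2 x (hsub hx) y (hsub hy) hxy
    · intro u hu
      simp only [Finset.mem_filter, Finset.mem_univ, true_and]
      constructor
      · exact Finset.subset_insert u ρ.1
      · intro a ha
        rcases Finset.mem_insert.mp ha with rfl | ha'
        · exact (Finset.mem_sdiff.mp hu).1
        · exact hρτ ha'
    · intro u₁ hu₁ u₂ hu₂ h
      have h' : insert u₁ ρ.1 = insert u₂ ρ.1 := congrArg Subtype.val h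
      have : u₁ ∈ insert u₂ ρ.1 := h' ▸ Finset.mem_insert_self u₁ ρ.1
      rcases Finset.mem_insert.mp this with rfl | hmem
      · rfl
      · exact absurd hmem (Finset.mem_sdiff.mp hu₁).2
    · intro σ hσ
      simp only [Finset.mem_filter, Finset.mem_univ, true_and] at hσ
      obtain ⟨y, hy, hins⟩ := exists_insert_of_card hσ.1 (by rw [ρ.2.1, σ.2.1])
      refine ⟨y, Finset.mem_sdiff.mpr
        ⟨hσ.2 (by rw [hins]; exact Finset.mem_insert_self y ρ.1), hy⟩, ?_⟩
      exact Subtype.ext hins.symm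
  exact hbij.symm.trans hcard

lemma bdry_bdry (n : ℕ) (c : Ch d α (n+2)) :
    bdry d α n (bdry d α (n+1) c) = 0 := by
  funext ρ
  rw [bdry_apply]
  have step : ∀ σ : Simp d α (n+1),
      (if ρ.1 ⊆ σ.1 then (1:ZMod 2) else 0) * bdry d α (n+1) c σ
      = ∑ τ : Simp d α (n+2), (if ρ.1 ⊆ σ.1 ∧ σ.1 ⊆ τ.1 then 1 else 0) * c τ := by
    intro σ
    rw [bdry_apply, Finset.mul_sum]
    refine Finset.sum_congr rfl fun τ _ => ?_
    rw [← mul_assoc]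
    congr 1
    by_cases h1 : ρ.1 ⊆ σ.1 <;> by_cases h2 : σ.1 ⊆ τ.1 <;> simp [h1, h2]
  have inner : ∀ τ : Simp d α (n+2),
      (∑ σ : Simp d α (n+1), (if ρ.1 ⊆ σ.1 ∧ σ.1 ⊆ τ.1 then (1:ZMod 2) else 0) * c τ) = 0 := by
    intro τ
    rw [← Finset.sum_mul]
    have hz : (∑ σ : Simp d α (n+1),
        if ρ.1 ⊆ σ.1 ∧ σ.1 ⊆ τ.1 then (1:ZMod 2) else 0) = 0 := by
      rw [Finset.sum_boole]
      by_cases h : ρ.1 ⊆ τ.1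
      · rw [between_card d α n ρ τ h]; rfl
      · have he : (Finset.univ.filter fun σ : Simp d α (n+1) => ρ.1 ⊆ σ.1 ∧ σ.1 ⊆ τ.1) = ∅ := by
          refine Finset.filter_eq_empty_iff.mpr fun σ _ => ?_
          rintro ⟨h1, h2⟩
          exact h (h1.trans h2)
        rw [he]; rfl
    rw [hz, zero_mul]
  calc (∑ σ : Simp d α (n+1), (if ρ.1 ⊆ σ.1 then (1:ZMod 2) else 0) * bdry d α (n+1) c σ)
      = ∑ σ : Simp d α (n+1), ∑ τ : Simp d α (n+2),
          (if ρ.1 ⊆ σ.1 ∧ σ.1 ⊆ τ.1 then 1 else 0) * c τ :=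
        Finset.sum_congr rfl fun σ _ => step σ
    _ = ∑ τ : Simp d α (n+2), ∑ σ : Simp d α (n+1),
          (if ρ.1 ⊆ σ.1 ∧ σ.1 ⊆ τ.1 then 1 else 0) * c τ := Finset.sum_comm
    _ = 0 := Finset.sum_eq_zero fun τ _ => inner τ

lemma bdry_ind (n : ℕ) (τ0 : Simp d α (n+1)) (c : Ch d α (n+1)) (h1 : c τ0 = 1)
    (h0 : ∀ b, b ≠ τ0 → c b = 0) :
    (∀ τ : Simp d α n, τ.1 ⊆ τ0.1 → bdry d α n c τ = 1) ∧
    (∀ τ : Simp d α n, ¬ τ.1 ⊆ τ0.1 → bdry d α n c τ = 0) := by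
  constructor <;> intro τ hsub <;>
    rw [bdry_apply, Fintype.sum_eq_single τ0 (fun b hb => by rw [h0 b hb, mul_zero]),
      h1, mul_one]
  · exact if_pos hsub
  · exact if_neg hsub

lemma exists_other (n : ℕ) (z : Ch d α (n+1)) (hz : bdry d α n z = 0) (τ : Simp d α n)
    (σ0 : Simp d α (n+1)) (hsub : τ.1 ⊆ σ0.1) (hz0 : z σ0 ≠ 0) :
    ∃ σ', σ' ≠ σ0 ∧ τ.1 ⊆ σ'.1 ∧ z σ' ≠ 0 := by
  by_contra hnex
  push_neg at hnex
  have hother : ∀ b, b ≠ σ0 → (if τ.1 ⊆ b.1 then (1:ZMod 2) else 0) * z b = 0 := by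
    intro b hb
    by_cases h1 : τ.1 ⊆ b.1
    · rw [hnex b hb h1, mul_zero]
    · rw [if_neg h1, zero_mul]
  have h0 := congrFun hz τ
  rw [bdry_apply, Fintype.sum_eq_single σ0 hother, if_pos hsub, one_mul] at h0
  exact hz0 h0

lemma key0 {N : ℕ} (d : VH N → VH N → ℝ≥0∞) (z : Ch d α 0) :
    z ∈ LinearMap.range (bdry d α 0) := by
  have hsO : (({vO} : Finset (VH N)).card = 0 + 1) ∧ ∀ x ∈ ({vO} : Finset (VH N)),
      ∀ y ∈ ({vO} : Finset (VH N)), x ≠ y → d x y ≤ ENNReal.ofReal α := by simp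
  have he : ((∅ : Finset (VH N)).card = 0) ∧ ∀ x ∈ (∅ : Finset (VH N)),
      ∀ y ∈ (∅ : Finset (VH N)), x ≠ y → d x y ≤ ENNReal.ofReal α := by simp
  set e0 : Simp d α 0 := ⟨∅, he⟩ with he0
  set sO : Simp d α (0+1) := ⟨{vO}, hsO⟩ with hsOdef
  refine ⟨fun σ => if σ = sO then z e0 else 0, ?_⟩
  funext τ
  have hτ : τ = e0 := Subtype.ext (Finset.card_eq_zero.mp τ.2.1)
  rw [bdry_apply, Finset.sum_eq_single sO]
  · rw [if_pos rfl]
    have hss : τ.1 ⊆ sO.1 := by rw [hτ]; exact Finset.empty_subset _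
    rw [if_pos hss, one_mul, hτ]
  · intro b _ hb; rw [if_neg hb, mul_zero]
  · simp

end Bdry

section Main

variable {N : ℕ} {w : Fin N → Fin N → ℝ≥0∞} {α : ℝ}

lemma vtxOf_pos {p : Finset (Fin N)} (h : p.Nonempty) :
    vtxOf N p = Sum.inl (Sum.inl (p.min' h)) := dif_pos h

lemma muOf_pos {p : Finset (Fin N)} (h : p.Nonempty) :
    muOf N p = ((p.min' h : Fin N) : ℕ) := dif_pos h

lemma muOf_neg {p : Finset (Fin N)} (h : ¬ p.Nonempty) : muOf N p = N := dif_neg h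

lemma zmod2_ne_zero : ∀ a : ZMod 2, a ≠ 0 → a = 1 := by decide

/-- If all simplices in the support of a cycle are matched downwards, the cycle is zero. -/
lemma claimA (n : ℕ) (z : Ch (dhat w w) α (n+1))
    (hz : bdry (dhat w w) α n z = 0)
    (hdown : ∀ σ : Simp (dhat w w) α (n+1), z σ ≠ 0 → vtxOf N (pIdx σ.1) ∈ σ.1) :
    z = 0 := by
  by_contra hne
  obtain ⟨σw, hσw⟩ := Function.ne_iff.mp hne
  have hσw' : z σw ≠ 0 := hσw
  have hsupp : (Finset.univ.filter fun σ : Simp (dhat w w) α (n+1) => z σ ≠ 0).Nonempty :=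
    ⟨σw, Finset.mem_filter.mpr ⟨Finset.mem_univ _, hσw'⟩⟩
  obtain ⟨σ0, hσ0mem, hmin⟩ :=
    Finset.exists_min_image _ (fun σ : Simp (dhat w w) α (n+1) => muOf N (pIdx σ.1)) hsupp
  have hz0 : z σ0 ≠ 0 := (Finset.mem_filter.mp hσ0mem).2
  set v := vtxOf N (pIdx σ0.1) with hvdef
  have hvmem : v ∈ σ0.1 := hdown σ0 hz0
  have hvu : ∀ j : Fin N, v ≠ Sum.inl (Sum.inr j) := fun j => vtxOf_ne_primed _ j
  have hτcard : (σ0.1.erase v).card = n := by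
    rw [Finset.card_erase_of_mem hvmem, σ0.2.1]; omega
  set τ : Simp (dhat w w) α n := ⟨σ0.1.erase v, hτcard,
    fun x hx y hy hxy => σ0.2.2 x (Finset.mem_of_mem_erase hx) y
      (Finset.mem_of_mem_erase hy) hxy⟩ with hτdef
  have hpτ : pIdx τ.1 = pIdx σ0.1 := pIdx_erase_unprimed hvu
  have hex : ∃ σ' : Simp (dhat w w) α (n+1), σ' ≠ σ0 ∧ τ.1 ⊆ σ'.1 ∧ z σ' ≠ 0 :=
    exists_other _ _ n z hz τ σ0 (Finset.erase_subset v σ0.1) hz0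
  obtain ⟨σ', hσ'ne, hσ'sub, hσ'z⟩ := hex
  obtain ⟨y, hyτ, hins⟩ := exists_insert_of_card hσ'sub (by rw [τ.2.1, σ'.2.1])
  have hyv : y ≠ v := by
    intro h
    apply hσ'ne
    apply Subtype.ext
    rw [hins, h]
    show insert v (σ0.1.erase v) = σ0.1
    exact Finset.insert_erase hvmem
  have hdown' : vtxOf N (pIdx σ'.1) ∈ σ'.1 := hdown σ' hσ'z
  have hvτ : v ∉ τ.1 := Finset.notMem_erase v σ0.1
  rcases y with (i | j) | u
  · -- y = A_i, unprimed
    have hpσ' : pIdx σ'.1 = pIdx σ0.1 := by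
      rw [hins, pIdx_insert_unprimed (by simp), hpτ]
    rw [hpσ', ← hvdef, hins] at hdown'
    rcases Finset.mem_insert.mp hdown' with h | h
    · exact hyv h.symm
    · exact hvτ h
  · -- y = A'_j, primed
    have hjτ : j ∉ pIdx τ.1 := fun h => hyτ (mem_pIdx.mp h)
    have hjσ0 : j ∉ pIdx σ0.1 := by rwa [hpτ] at hjτ
    have hpσ' : pIdx σ'.1 = insert j (pIdx σ0.1) := by
      rw [hins, pIdx_insert_primed, hpτ]
    have hσ'supp : σ' ∈ Finset.univ.filter
        fun σ : Simp (dhat w w) α (n+1) => z σ ≠ 0 :=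
      Finset.mem_filter.mpr ⟨Finset.mem_univ _, hσ'z⟩
    have hminσ' := hmin σ' hσ'supp
    by_cases hp : (pIdx σ0.1).Nonempty
    · set m := (pIdx σ0.1).min' hp with hmdef
      have hvm : v = Sum.inl (Sum.inl m) := by rw [hvdef, vtxOf_pos hp]
      rcases lt_trichotomy j m with hlt | heq | hgt
      · -- j < m : contradicts minimality
        have hne' : (insert j (pIdx σ0.1)).Nonempty := ⟨j, Finset.mem_insert_self _ _⟩
        have hminj : (insert j (pIdx σ0.1)).min' hne' = j := by
          apply le_antisymm (Finset.min'_le _ j (Finset.mem_insert_self _ _))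
          apply Finset.le_min'
          intro b hb
          rcases Finset.mem_insert.mp hb with rfl | hb'
          · exact le_refl _
          · exact le_of_lt (lt_of_lt_of_le hlt ((pIdx σ0.1).min'_le b hb'))
        have h1 : muOf N (pIdx σ'.1) = (j : ℕ) := by
          rw [hpσ', muOf_pos hne', hminj]
        have h2 : muOf N (pIdx σ0.1) = (m : ℕ) := muOf_pos hp
        rw [h1, h2] at hminσ'
        exact absurd hminσ' (not_le_of_gt hlt)
      · exact hjσ0 (heq ▸ (pIdx σ0.1).min'_mem hp)
      · -- j > m : σ' is matched downward to A_m which is not in σ'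
        have hne' : (insert j (pIdx σ0.1)).Nonempty := ⟨j, Finset.mem_insert_self _ _⟩
        have hminm : (insert j (pIdx σ0.1)).min' hne' = m := by
          apply le_antisymm
            (Finset.min'_le _ m (Finset.mem_insert_of_mem ((pIdx σ0.1).min'_mem hp)))
          apply Finset.le_min'
          intro b hb
          rcases Finset.mem_insert.mp hb with rfl | hb'
          · exact le_of_lt hgt
          · exact (pIdx σ0.1).min'_le b hb'
        have hvσ' : vtxOf N (pIdx σ'.1) = v := by
          rw [hpσ', vtxOf_pos hne', hminm, hvm]
        rw [hvσ', hins] at hdown'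
        rcases Finset.mem_insert.mp hdown' with h | h
        · rw [hvm] at h; exact absurd h (by simp)
        · exact hvτ h
    · -- pIdx σ0 empty : contradicts minimality
      have hne' : (insert j (pIdx σ0.1)).Nonempty := ⟨j, Finset.mem_insert_self _ _⟩
      have h1 : muOf N (pIdx σ'.1) ≤ (j : ℕ) := by
        rw [hpσ', muOf_pos hne']
        have := Finset.min'_le (insert j (pIdx σ0.1)) j (Finset.mem_insert_self _ _)
        exact this
      have h2 : muOf N (pIdx σ0.1) = N := muOf_neg hp
      rw [h2] at hminσ'
      have := j.isLt
      omega
  · -- y = O, unprimed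
    have hpσ' : pIdx σ'.1 = pIdx σ0.1 := by
      rw [hins, pIdx_insert_unprimed (by simp), hpτ]
    rw [hpσ', ← hvdef, hins] at hdown'
    rcases Finset.mem_insert.mp hdown' with h | h
    · exact hyv h.symm
    · exact hvτ h

/-- If erasing `y ∈ σ0` from `insert v σ0` produces an "up" face, then `y` must be the
primed vertex with minimal index. -/
lemma up_face_eq {σ0 : Finset (VH N)} (hv : vtxOf N (pIdx σ0) ∉ σ0) {y : VH N}
    (hy : y ∈ σ0)
    (hup : vtxOf N (pIdx ((insert (vtxOf N (pIdx σ0)) σ0).erase y)) ∉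
      (insert (vtxOf N (pIdx σ0)) σ0).erase y) :
    ∃ h : (pIdx σ0).Nonempty, y = Sum.inl (Sum.inr ((pIdx σ0).min' h)) := by
  rcases y with (i | j) | u
  · exact absurd (face_down_unprimed hv hy (by simp)) hup
  · have hj : j ∈ pIdx σ0 := mem_pIdx.mpr hy
    have hp : (pIdx σ0).Nonempty := ⟨j, hj⟩
    refine ⟨hp, ?_⟩
    by_contra hne
    exact hup (face_down_primed hv hp hj (fun h => hne (by rw [h])))
  · exact absurd (face_down_unprimed hv hy (by simp)) hup

lemma sum_insert_le' {γ : Type*} [DecidableEq γ] (s : Finset γ) (a : γ) (f : γ → ℕ) :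
    ∑ x ∈ insert a s, f x ≤ f a + ∑ x ∈ s, f x := by
  by_cases h : a ∈ s
  · rw [Finset.insert_eq_self.mpr h]
    exact Nat.le_add_left _ _
  · rw [Finset.sum_insert h]

/-- Every cycle of the augmented chain complex of `R_α(Ĝ^{w,w})` is a boundary. -/
lemma keyS (hw : ∀ i j, w i j = w j i) (n : ℕ) (z : Ch (dhat w w) α (n+1))
    (hz : bdry (dhat w w) α n z = 0) :
    z ∈ LinearMap.range (bdry (dhat w w) α (n+1)) := by
  suffices H : ∀ K : ℕ, ∀ z : Ch (dhat w w) α (n+1),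
      (∑ σ ∈ (Finset.univ.filter fun σ : Simp (dhat w w) α (n+1) =>
          z σ ≠ 0 ∧ vtxOf N (pIdx σ.1) ∉ σ.1), 2^(N - muOf N (pIdx σ.1))) ≤ K →
      bdry (dhat w w) α n z = 0 →
      z ∈ LinearMap.range (bdry (dhat w w) α (n+1)) by
    exact H _ z le_rfl hz
  intro K
  induction K with
  | zero =>
    intro z hm hz
    have hdown : ∀ σ : Simp (dhat w w) α (n+1), z σ ≠ 0 → vtxOf N (pIdx σ.1) ∈ σ.1 := by
      intro σ hσ
      by_contra hv
      have hmem : σ ∈ Finset.univ.filter fun σ : Simp (dhat w w) α (n+1) =>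
          z σ ≠ 0 ∧ vtxOf N (pIdx σ.1) ∉ σ.1 :=
        Finset.mem_filter.mpr ⟨Finset.mem_univ _, hσ, hv⟩
      have hle := Finset.single_le_sum
        (f := fun σ : Simp (dhat w w) α (n+1) => 2^(N - muOf N (pIdx σ.1)))
        (fun i _ => Nat.zero_le _) hmem
      have hpos : 0 < 2^(N - muOf N (pIdx σ.1)) := Nat.pow_pos (by norm_num)
      omega
    rw [claimA n z hz hdown]
    exact zero_mem _
  | succ K ih =>
    intro z hm hz
    by_cases hup : ∃ σ0 : Simp (dhat w w) α (n+1), z σ0 ≠ 0 ∧ vtxOf N (pIdx σ0.1) ∉ σ0.1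
    · obtain ⟨σ0, hz0, hvup⟩ := hup
      set v := vtxOf N (pIdx σ0.1) with hvdef
      have ht0card : (insert v σ0.1).card = (n+1) + 1 := by
        rw [Finset.card_insert_of_notMem hvup, σ0.2.1]
      set τ0 : Simp (dhat w w) α ((n+1)+1) :=
        ⟨insert v σ0.1, ht0card, insert_vtx_vr hw σ0.2.2⟩ with hτ0def
      set c : Ch (dhat w w) α ((n+1)+1) := fun σ => if σ = τ0 then 1 else 0 with hcdef
      obtain ⟨hbc1, hbc0⟩ := bdry_ind (dhat w w) α (n+1) τ0 c (if_pos rfl)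
        (fun b hb => if_neg hb)
      set z' := z + bdry (dhat w w) α (n+1) c with hz'def
      have hz'app : ∀ τ : Simp (dhat w w) α (n+1),
          z' τ = z τ + bdry (dhat w w) α (n+1) c τ := fun τ => rfl
      have hz'cyc : bdry (dhat w w) α n z' = 0 := by
        rw [hz'def, map_add, hz, bdry_bdry, add_zero]
      have hz'σ0 : z' σ0 = 0 := by
        rw [hz'app, hbc1 σ0 (Finset.subset_insert v σ0.1), zmod2_ne_zero _ hz0]
        decide
      -- the support of z' (up part) is controlled
      have hfacemem : ∀ τ : Simp (dhat w w) α (n+1), z' τ ≠ 0 → vtxOf N (pIdx τ.1) ∉ τ.1 →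
          τ ≠ σ0 →
          (z τ ≠ 0 ∧ ¬ τ.1 ⊆ insert v σ0.1) ∨
          ∃ h : (pIdx σ0.1).Nonempty,
            τ.1 = (insert v σ0.1).erase (Sum.inl (Sum.inr ((pIdx σ0.1).min' h))) := by
        intro τ hτz hτup hτne
        by_cases hsubt : τ.1 ⊆ insert v σ0.1
        · right
          obtain ⟨y, hyτ, hins⟩ := exists_insert_of_card hsubt (by rw [τ.2.1, ht0card])
          have hyt0 : y ∈ insert v σ0.1 := by rw [hins]; exact Finset.mem_insert_self _ _
          have hτery : τ.1 = (insert v σ0.1).erase y := by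
            rw [hins, Finset.erase_insert hyτ]
          rcases Finset.mem_insert.mp hyt0 with rfl | hyσ0
          · exfalso
            apply hτne
            apply Subtype.ext
            rw [hτery]
            show (insert v σ0.1).erase v = σ0.1
            exact Finset.erase_insert hvup
          · rw [hτery] at hτup
            obtain ⟨hp, hyeq⟩ := up_face_eq hvup hyσ0 hτup
            exact ⟨hp, by rw [hτery, hyeq]⟩
        · left
          constructor
          · intro hzτ
            rw [hz'app, hzτ, hbc0 τ hsubt, add_zero] at hτz
            exact hτz rfl
          · exact hsubt
      have hσ0S : σ0 ∈ Finset.univ.filter fun σ : Simp (dhat w w) α (n+1) =>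
          z σ ≠ 0 ∧ vtxOf N (pIdx σ.1) ∉ σ.1 :=
        Finset.mem_filter.mpr ⟨Finset.mem_univ _, hz0, hvup⟩
      -- measure decreases
      have hmeas : (∑ σ ∈ (Finset.univ.filter fun σ : Simp (dhat w w) α (n+1) =>
          z' σ ≠ 0 ∧ vtxOf N (pIdx σ.1) ∉ σ.1), 2^(N - muOf N (pIdx σ.1))) ≤ K := by
        set f : Simp (dhat w w) α (n+1) → ℕ := fun σ => 2^(N - muOf N (pIdx σ.1)) with hfdef
        set S := Finset.univ.filter fun σ : Simp (dhat w w) α (n+1) =>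
          z σ ≠ 0 ∧ vtxOf N (pIdx σ.1) ∉ σ.1 with hSdef
        set S' := Finset.univ.filter fun σ : Simp (dhat w w) α (n+1) =>
          z' σ ≠ 0 ∧ vtxOf N (pIdx σ.1) ∉ σ.1 with hS'def
        have hES : ∑ x ∈ S.erase σ0, f x + f σ0 = ∑ x ∈ S, f x :=
          Finset.sum_erase_add S f hσ0S
        have hfpos : 0 < f σ0 := Nat.pow_pos (by norm_num)
        by_cases hp : (pIdx σ0.1).Nonempty
        · -- there is a potential new up face τstar
          set m := (pIdx σ0.1).min' hp with hmdef
          have hmσ0 : Sum.inl (Sum.inr m) ∈ σ0.1 := mem_pIdx.mp ((pIdx σ0.1).min'_mem hp)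
          have hmt0 : Sum.inl (Sum.inr m) ∈ insert v σ0.1 := Finset.mem_insert_of_mem hmσ0
          have hstarcard : ((insert v σ0.1).erase (Sum.inl (Sum.inr m))).card = n + 1 := by
            rw [Finset.card_erase_of_mem hmt0, ht0card]; omega
          set τstar : Simp (dhat w w) α (n+1) :=
            ⟨(insert v σ0.1).erase (Sum.inl (Sum.inr m)), hstarcard,
              fun x hx y hy hxy => (insert_vtx_vr hw σ0.2.2) x (Finset.mem_of_mem_erase hx)
                y (Finset.mem_of_mem_erase hy) hxy⟩ with hτstardef
          have hsub : S' ⊆ insert τstar (S.erase σ0) := by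
            intro τ hτ
            obtain ⟨-, hτz, hτup⟩ := Finset.mem_filter.mp hτ
            have hτne : τ ≠ σ0 := fun h => hτz (h ▸ hz'σ0)
            rcases hfacemem τ hτz hτup hτne with ⟨hzτ, -⟩ | ⟨hp', heq⟩
            · exact Finset.mem_insert_of_mem (Finset.mem_erase.mpr ⟨hτne,
                Finset.mem_filter.mpr ⟨Finset.mem_univ _, hzτ, hτup⟩⟩)
            · have : τ = τstar := Subtype.ext (by rw [heq])
              rw [this]
              exact Finset.mem_insert_self _ _
          have hflt : f τstar < f σ0 := by
            have h1 : muOf N (pIdx σ0.1) < muOf N (pIdx τstar.1) := mu_face_gt hp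
            have h2 : muOf N (pIdx σ0.1) = (m : ℕ) := muOf_pos hp
            have h3 : (m : ℕ) < N := m.isLt
            apply Nat.pow_lt_pow_right (by norm_num)
            omega
          have h4 : ∑ x ∈ S', f x ≤ f τstar + ∑ x ∈ S.erase σ0, f x :=
            le_trans (Finset.sum_le_sum_of_subset hsub) (sum_insert_le' _ _ f)
          have h5 : ∑ x ∈ S, f x ≤ K + 1 := hm
          have hES' : ∑ x ∈ S.erase σ0, f x + f σ0 = ∑ x ∈ S, f x := hES
          show (∑ x ∈ S', f x) ≤ K
          omega
        · -- no new up faces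
          have hsub : S' ⊆ S.erase σ0 := by
            intro τ hτ
            obtain ⟨-, hτz, hτup⟩ := Finset.mem_filter.mp hτ
            have hτne : τ ≠ σ0 := fun h => hτz (h ▸ hz'σ0)
            rcases hfacemem τ hτz hτup hτne with ⟨hzτ, -⟩ | ⟨hp', -⟩
            · exact Finset.mem_erase.mpr ⟨hτne,
                Finset.mem_filter.mpr ⟨Finset.mem_univ _, hzτ, hτup⟩⟩
            · exact absurd hp' hp
          have h4 : ∑ x ∈ S', f x ≤ ∑ x ∈ S.erase σ0, f x :=
            Finset.sum_le_sum_of_subset hsub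
          have h5 : ∑ x ∈ S, f x ≤ K + 1 := hm
          have hES' : ∑ x ∈ S.erase σ0, f x + f σ0 = ∑ x ∈ S, f x := hES
          have hfpos' : 0 < f σ0 := hfpos
          show (∑ x ∈ S', f x) ≤ K
          omega
      obtain ⟨y', hy'⟩ := ih z' hmeas hz'cyc
      refine ⟨y' + c, ?_⟩
      rw [map_add, hy', hz'def]
      funext τ
      simp only [Pi.add_apply]
      have h2 : ∀ a : ZMod 2, a + a = 0 := by decide
      calc z τ + bdry (dhat w w) α (n+1) c τ + bdry (dhat w w) α (n+1) c τ
          = z τ + (bdry (dhat w w) α (n+1) c τ + bdry (dhat w w) α (n+1) c τ) := by ring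
        _ = z τ := by rw [h2, add_zero]
    · push_neg at hup
      have hdown : ∀ σ : Simp (dhat w w) α (n+1), z σ ≠ 0 → vtxOf N (pIdx σ.1) ∈ σ.1 :=
        fun σ hσ => hup σ hσ
      rw [claimA n z hz hdown]
      exact zero_mem _

end Main

end RTD

namespace RTD

/-- If `w̃ = w`, then for every `α ≥ 0` all the homology of the augmented ℤ/2 chain complex
of the Vietoris–Rips complex of `Ĝ^{w,w}` vanishes: the homology at every position `n` of
the augmented complex (i.e. in every degree `n - 1 ≥ -1`, all other degrees carrying the
zero space) is zero. -/
theorem homology_hatG_self_vanishes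
    (N : ℕ) (w : Fin N → Fin N → ℝ≥0∞) (hw : ∀ i j, w i j = w j i)
    (α : ℝ) (hα : 0 ≤ α) :
    ∀ n : ℕ, Subsingleton (homologyAt (dhat w w) α n) := by
  intro n
  rw [Submodule.Quotient.subsingleton_iff, Submodule.eq_top_iff']
  intro x
  rw [Submodule.mem_comap]
  cases n with
  | zero => exact key0 α (dhat w w) x.1
  | succ n =>
    have hx : bdry (dhat w w) α n x.1 = 0 := x.2
    exact keyS hw n x.1 hx

end RTD
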